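/- For all integers n ≥ 2 and 0 ≤ k ≤ n−2, (n² − k²)·C_k^n = −k²·C_k^{n−2}; moreover C_{n−1}^n = 0 for every n ≥ 1. -/

import Mathlib

open Nat in
/-- `C_k^n = cos((n−k)π/2) kⁿ / ((n−k)‼ (n+k)‼)` for `0 ≤ k ≤ n`. -/
noncomputable def Ccoef (n k : ℕ) : ℝ :=
  Real.cos (((n - k : ℕ) : ℝ) * Real.pi / 2) * (k : ℝ) ^ n /
    (((n - k)‼ : ℝ) * ((n + k)‼ : ℝ))

open Nat in
/-- For `n ≥ 2` and `0 ≤ k ≤ n − 2`, `(n² − k²) C_k^n = −k² C_k^{n−2}`;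
moreover `C_{n−1}^n = 0` for every `n ≥ 1`. -/
theorem C_recurrence :
    (∀ n : ℕ, 2 ≤ n → ∀ k : ℕ, k ≤ n - 2 →
      ((n : ℝ) ^ 2 - (k : ℝ) ^ 2) * Ccoef n k = -(k : ℝ) ^ 2 * Ccoef (n - 2) k) ∧
    (∀ n : ℕ, 1 ≤ n → Ccoef n (n - 1) = 0) := by
  constructor
  · intro n hn k hk
    obtain ⟨m, rfl⟩ : ∃ m, n = m + 2 := ⟨n - 2, by omega⟩
    have hk' : k ≤ m := by omega
    have h1 : m + 2 - k = (m - k) + 2 := by omega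
    have h2 : m + 2 + k = (m + k) + 2 := by omega
    have h3 : m + 2 - 2 = m := by omega
    have hc : Real.cos ((((m - k) + 2 : ℕ) : ℝ) * Real.pi / 2) =
        - Real.cos (((m - k : ℕ) : ℝ) * Real.pi / 2) := by
      push_cast
      rw [show ((m - k : ℕ) + 2 : ℝ) * Real.pi / 2 =
        (m - k : ℕ) * Real.pi / 2 + Real.pi by ring, Real.cos_add_pi]
    have hd1 : ((m - k)‼ : ℝ) ≠ 0 := by positivity
    have hd2 : ((m + k)‼ : ℝ) ≠ 0 := by positivity
    simp only [Ccoef, h1, h2, h3, Nat.doubleFactorial_add_two, hc]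
    have hcast : ((m + 2 : ℕ) : ℝ) ^ 2 - (k : ℝ) ^ 2 =
        ((m - k : ℕ) + 2) * ((m + k : ℕ) + 2) := by
      have : ((m - k : ℕ) : ℝ) = (m : ℝ) - k := by
        push_cast [Nat.cast_sub hk']; ring
      rw [this]; push_cast; ring
    rw [hcast]
    have hx : ((m - k : ℕ) : ℝ) + 2 ≠ 0 := by positivity
    have hy : (m : ℝ) + (k : ℝ) + 2 ≠ 0 := by positivity
    have key : ∀ (a b c x y km k2 : ℝ), a ≠ 0 → b ≠ 0 → x + 2 ≠ 0 → y + 2 ≠ 0 →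
        (x + 2) * (y + 2) * (-c * (km * k2) / ((x + 2) * a * ((y + 2) * b))) =
          -k2 * (c * km / (a * b)) := by
      intro a b c x y km k2 ha hb hxx hyy
      field_simp
    have hpow : (k : ℝ) ^ (m + 2) = (k : ℝ) ^ m * (k : ℝ) ^ 2 := by rw [pow_add]
    push_cast
    rw [hpow]
    exact key _ _ _ _ _ _ _ hd1 hd2 hx hy
  · intro n hn
    obtain ⟨m, rfl⟩ : ∃ m, n = m + 1 := ⟨n - 1, by omega⟩
    have h : m + 1 - (m + 1 - 1) = 1 := by omega
    simp [Ccoef, h, Real.cos_pi_div_two]
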